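/- Let g : D → ℝ be differentiable on an open convex set D in a finite-dimensional inner-product space, symmetric about a point c (g(2c − ξ) = g(ξ) for all ξ ∈ D, with 2c − ξ ∈ D). Let I(φ) = sup_{ξ∈D}(⟨ξ,φ⟩ − g(ξ)). If φ = ∇g(ξ) and −φ = ∇g(2c − ξ) for some ξ with both ξ and 2c − ξ in D, then I(−φ) = I(φ) − 2⟨c, φ⟩. -/
import Mathlib

open scoped RealInnerProductSpace

/-- Support inequality for a convex differentiable function on an open convex set:
`g x + ⟪∇g x, y - x⟫ ≤ g y`. -/
lemma support_ineq_of_convexOn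
    {Ξ : Type*} [NormedAddCommGroup Ξ] [InnerProductSpace ℝ Ξ] [FiniteDimensional ℝ Ξ]
    {D : Set Ξ} (hD : IsOpen D) (hDc : Convex ℝ D)
    {g : Ξ → ℝ} (hdiff : DifferentiableOn ℝ g D) (hconv : ConvexOn ℝ D g)
    {x y : Ξ} (hx : x ∈ D) (hy : y ∈ D) :
    g x + ⟪gradient g x, y - x⟫ ≤ g y := by
  have hgd : DifferentiableAt ℝ g x :=
    (hdiff x hx).differentiableAt (hD.mem_nhds hx)
  have hgr : HasGradientAt g (gradient g x) x := hgd.hasGradientAt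
  have hF : HasFDerivAt g ((InnerProductSpace.toDual ℝ Ξ) (gradient g x)) x :=
    hgr.hasFDerivAt
  -- restriction to the line
  set L := AffineMap.lineMap (k := ℝ) x y with hL
  have hmap : ∀ t ∈ Set.Icc (0 : ℝ) 1, L t ∈ D := by
    intro t ht
    have : L t ∈ segment ℝ x y := by
      rw [segment_eq_image_lineMap]
      exact ⟨t, ht, rfl⟩
    exact hDc.segment_subset hx hy this
  have hconvh : ConvexOn ℝ (Set.Icc (0 : ℝ) 1) (g ∘ L) :=
    (hconv.comp_affineMap L).subset (fun t ht => hmap t ht) (convex_Icc 0 1)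
  have hL0 : L (0 : ℝ) = x := by simp [hL]
  have hL1 : L (1 : ℝ) = y := by simp [hL]
  have hderivL : HasDerivAt L (y - x) 0 := AffineMap.hasDerivAt_lineMap
  have hderiv : HasDerivAt (g ∘ L) (⟪gradient g x, y - x⟫) 0 := by
    have hF' : HasFDerivAt g ((InnerProductSpace.toDual ℝ Ξ) (gradient g x)) (L 0) :=
      hL0.symm ▸ hF
    have := hF'.comp_hasDerivAt (x := (0 : ℝ)) hderivL
    simpa [InnerProductSpace.toDual_apply_apply] using this
  have h01 : (0 : ℝ) < 1 := one_pos
  have hslope := hconvh.le_slope_of_hasDerivAt (Set.left_mem_Icc.2 h01.le)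
    (Set.right_mem_Icc.2 h01.le) h01 hderiv
  have : ⟪gradient g x, y - x⟫ ≤ g y - g x := by
    simpa [slope, hL0, hL1] using hslope
  linarith

/-- Fluctuation relation for the Legendre transform of a centrally symmetric convex
function: if `g(2c − ξ) = g(ξ)` on the open convex set `D`, `I(φ) = sup_{ξ∈D}(⟨ξ,φ⟩ − g(ξ))`,
and `φ = ∇g(ξ₀)`, `−φ = ∇g(2c − ξ₀)` with `ξ₀, 2c − ξ₀ ∈ D`, then
`I(−φ) = I(φ) − 2⟨c, φ⟩`. -/
theorem fluctuation_relation_of_central_symmetry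
    {Ξ : Type*} [NormedAddCommGroup Ξ] [InnerProductSpace ℝ Ξ] [FiniteDimensional ℝ Ξ]
    (D : Set Ξ) (hD : IsOpen D) (hDc : Convex ℝ D)
    (g : Ξ → ℝ) (hdiff : DifferentiableOn ℝ g D) (hconv : ConvexOn ℝ D g)
    (c : Ξ) (hsym : ∀ ξ ∈ D, (2 : ℝ) • c - ξ ∈ D ∧ g ((2 : ℝ) • c - ξ) = g ξ)
    (I : Ξ → ℝ) (hI : ∀ φ : Ξ, I φ = sSup ((fun ξ => ⟪ξ, φ⟫ - g ξ) '' D))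
    (φ ξ₀ : Ξ) (hξ₀ : ξ₀ ∈ D)
    (hgrad : gradient g ξ₀ = φ)
    (hgrad' : gradient g ((2 : ℝ) • c - ξ₀) = -φ) :
    I (-φ) = I φ - 2 * ⟪c, φ⟫ := by
  -- the supremum defining I ψ is attained at any point with gradient ψ
  have key : ∀ (ψ x₀ : Ξ), x₀ ∈ D → gradient g x₀ = ψ →
      I ψ = ⟪x₀, ψ⟫ - g x₀ := by
    intro ψ x₀ hx₀ hg
    rw [hI ψ]
    refine IsGreatest.csSup_eq ⟨⟨x₀, hx₀, rfl⟩, ?_⟩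
    rintro _ ⟨η, hη, rfl⟩
    show ⟪η, ψ⟫ - g η ≤ ⟪x₀, ψ⟫ - g x₀
    have hsup := support_ineq_of_convexOn hD hDc hdiff hconv hx₀ hη
    rw [hg] at hsup
    have : ⟪ψ, η - x₀⟫ = ⟪η, ψ⟫ - ⟪x₀, ψ⟫ := by
      rw [inner_sub_right, real_inner_comm ψ η, real_inner_comm ψ x₀]
    linarith [hsup, this.le, this.ge]
  have hmem : (2 : ℝ) • c - ξ₀ ∈ D := (hsym ξ₀ hξ₀).1
  have hval : g ((2 : ℝ) • c - ξ₀) = g ξ₀ := (hsym ξ₀ hξ₀).2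
  have h1 : I φ = ⟪ξ₀, φ⟫ - g ξ₀ := key φ ξ₀ hξ₀ hgrad
  have h2 : I (-φ) = ⟪(2 : ℝ) • c - ξ₀, -φ⟫ - g ((2 : ℝ) • c - ξ₀) :=
    key (-φ) ((2 : ℝ) • c - ξ₀) hmem hgrad'
  rw [h2, hval, h1]
  rw [inner_neg_right, inner_sub_left, real_inner_smul_left]
  ring
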